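/- Let g be a real constant, c ≠ 0 a real constant, z_b : ℝ × ℝ → ℝ differentiable, and h, u, v, w, σ, p̄, p_b : ℝ × ℝ → ℝ → ℝ continuously differentiable functions of (x,y,t). Assume that at every point the two-dimensional hyperbolic SGN system holds: (i) ∂_t h + ∂_x(h·u) + ∂_y(h·v) = 0; (ii) ∂_t(h·u) + ∂_x(h·u² + h·p̄) + ∂_y(h·v·u) + g·h·∂_x h + (g·h + p_b)·∂_x z_b = 0; (iii) ∂_t(h·v) + ∂_x(h·u·v) + ∂_y(h·v² + h·p̄) + g·h·∂_y h + (g·h + p_b)·∂_y z_b = 0; (iv) ∂_t(h·w) + ∂_x(h·u·w) + ∂_y(h·v·w) = p_b; (v) ∂_t(h·σ) + ∂_x(h·u·σ) + ∂_y(h·v·σ) = −6·p_b + 12·p̄; (vi) ∂_t(h·p̄) + ∂_x[h·u·(p̄ + c²)] + ∂_y[h·v·(p̄ + c²)] − c²·u·∂_x h − c²·v·∂_y h = −c²·σ; (vii) ∂_t(h·p_b) + ∂_x(h·u·p_b) + ∂_y(h·v·p_b) − 6·c²·u·∂_x z_b − 6·c²·v·∂_y z_b = −6·c²·(w − σ/2).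 Define E := (h/2)·(u² + v² + w² + g·(h + 2·z_b) + σ²/12 + p̄²/c² + p_b²/(6·c²)). Then at every point: ∂_t E + ∂_x[u·(E + g·h²/2 + h·p̄)] + ∂_y[v·(E + g·h²/2 + h·p̄)] = 0. -/

import Mathlib

/-- Partial derivative with respect to the first space argument. -/
noncomputable def pdx (f : ℝ × ℝ → ℝ → ℝ) (x y t : ℝ) : ℝ :=
  deriv (fun x' => f (x', y) t) x

/-- Partial derivative with respect to the second space argument. -/
noncomputable def pdy (f : ℝ × ℝ → ℝ → ℝ) (x y t : ℝ) : ℝ :=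
  deriv (fun y' => f (x, y') t) y

/-- Partial derivative with respect to the time argument. -/
noncomputable def pdt (f : ℝ × ℝ → ℝ → ℝ) (x y t : ℝ) : ℝ :=
  deriv (fun t' => f (x, y) t') t

set_option maxHeartbeats 2000000 in
theorem stmt_15 (g c : ℝ) (hc : c ≠ 0)
    (zb : ℝ × ℝ → ℝ) (hzb : Differentiable ℝ zb)
    (h u v w sg pbar pb : ℝ × ℝ → ℝ → ℝ)
    (hh : ContDiff ℝ 1 (fun p : (ℝ × ℝ) × ℝ => h p.1 p.2))
    (hu : ContDiff ℝ 1 (fun p : (ℝ × ℝ) × ℝ => u p.1 p.2))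
    (hv : ContDiff ℝ 1 (fun p : (ℝ × ℝ) × ℝ => v p.1 p.2))
    (hw : ContDiff ℝ 1 (fun p : (ℝ × ℝ) × ℝ => w p.1 p.2))
    (hsg : ContDiff ℝ 1 (fun p : (ℝ × ℝ) × ℝ => sg p.1 p.2))
    (hpbar : ContDiff ℝ 1 (fun p : (ℝ × ℝ) × ℝ => pbar p.1 p.2))
    (hpb : ContDiff ℝ 1 (fun p : (ℝ × ℝ) × ℝ => pb p.1 p.2))
    (mass : ∀ x y t : ℝ,
      pdt h x y t + pdx (fun q t => h q t * u q t) x y t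
        + pdy (fun q t => h q t * v q t) x y t = 0)
    (momx : ∀ x y t : ℝ,
      pdt (fun q t => h q t * u q t) x y t
        + pdx (fun q t => h q t * (u q t) ^ 2 + h q t * pbar q t) x y t
        + pdy (fun q t => h q t * v q t * u q t) x y t
        + g * h (x, y) t * pdx h x y t
        + (g * h (x, y) t + pb (x, y) t) * deriv (fun x' => zb (x', y)) x = 0)
    (momy : ∀ x y t : ℝ,
      pdt (fun q t => h q t * v q t) x y t
        + pdx (fun q t => h q t * u q t * v q t) x y t
        + pdy (fun q t => h q t * (v q t) ^ 2 + h q t * pbar q t) x y t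
        + g * h (x, y) t * pdy h x y t
        + (g * h (x, y) t + pb (x, y) t) * deriv (fun y' => zb (x, y')) y = 0)
    (momz : ∀ x y t : ℝ,
      pdt (fun q t => h q t * w q t) x y t
        + pdx (fun q t => h q t * u q t * w q t) x y t
        + pdy (fun q t => h q t * v q t * w q t) x y t = pb (x, y) t)
    (sigmaEvol : ∀ x y t : ℝ,
      pdt (fun q t => h q t * sg q t) x y t
        + pdx (fun q t => h q t * u q t * sg q t) x y t
        + pdy (fun q t => h q t * v q t * sg q t) x y t
      = -6 * pb (x, y) t + 12 * pbar (x, y) t)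
    (pEvol : ∀ x y t : ℝ,
      pdt (fun q t => h q t * pbar q t) x y t
        + pdx (fun q t => h q t * u q t * (pbar q t + c ^ 2)) x y t
        + pdy (fun q t => h q t * v q t * (pbar q t + c ^ 2)) x y t
        - c ^ 2 * u (x, y) t * pdx h x y t
        - c ^ 2 * v (x, y) t * pdy h x y t
      = -(c ^ 2) * sg (x, y) t)
    (pbEvol : ∀ x y t : ℝ,
      pdt (fun q t => h q t * pb q t) x y t
        + pdx (fun q t => h q t * u q t * pb q t) x y t
        + pdy (fun q t => h q t * v q t * pb q t) x y t
        - 6 * c ^ 2 * u (x, y) t * deriv (fun x' => zb (x', y)) x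
        - 6 * c ^ 2 * v (x, y) t * deriv (fun y' => zb (x, y')) y
      = -(6 * c ^ 2) * (w (x, y) t - sg (x, y) t / 2)) :
    ∀ x y t : ℝ,
      pdt (fun q t => h q t / 2 *
          ((u q t) ^ 2 + (v q t) ^ 2 + (w q t) ^ 2 + g * (h q t + 2 * zb q)
            + (sg q t) ^ 2 / 12 + (pbar q t) ^ 2 / c ^ 2
            + (pb q t) ^ 2 / (6 * c ^ 2))) x y t
        + pdx (fun q t =>
            u q t * (h q t / 2 *
                ((u q t) ^ 2 + (v q t) ^ 2 + (w q t) ^ 2 + g * (h q t + 2 * zb q)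
                  + (sg q t) ^ 2 / 12 + (pbar q t) ^ 2 / c ^ 2
                  + (pb q t) ^ 2 / (6 * c ^ 2))
              + g * (h q t) ^ 2 / 2 + h q t * pbar q t)) x y t
        + pdy (fun q t =>
            v q t * (h q t / 2 *
                ((u q t) ^ 2 + (v q t) ^ 2 + (w q t) ^ 2 + g * (h q t + 2 * zb q)
                  + (sg q t) ^ 2 / 12 + (pbar q t) ^ 2 / c ^ 2
                  + (pb q t) ^ 2 / (6 * c ^ 2))
              + g * (h q t) ^ 2 / 2 + h q t * pbar q t)) x y t = 0 := by
  intro x y t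
  have hc2 : (c:ℝ) ^ 2 ≠ 0 := pow_ne_zero 2 hc
  have hc6 : (6:ℝ) * c ^ 2 ≠ 0 := by positivity
  have hdh := hh.differentiable one_ne_zero
  have hdu := hu.differentiable one_ne_zero
  have hdv := hv.differentiable one_ne_zero
  have hdw := hw.differentiable one_ne_zero
  have hdsg := hsg.differentiable one_ne_zero
  have hdpbar := hpbar.differentiable one_ne_zero
  have hdpb := hpb.differentiable one_ne_zero
  have Hhx : HasDerivAt (fun x' : ℝ => h (x', y) t) (deriv (fun x' : ℝ => h (x', y) t) x) x :=
    ((hdh.comp (by fun_prop : Differentiable ℝ fun x' : ℝ => ((x', y), t))).differentiableAt).hasDerivAt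
  have Hhy : HasDerivAt (fun y' : ℝ => h (x, y') t) (deriv (fun y' : ℝ => h (x, y') t) y) y :=
    ((hdh.comp (by fun_prop : Differentiable ℝ fun y' : ℝ => ((x, y'), t))).differentiableAt).hasDerivAt
  have Hht : HasDerivAt (fun t' : ℝ => h (x, y) t') (deriv (fun t' : ℝ => h (x, y) t') t) t :=
    ((hdh.comp (by fun_prop : Differentiable ℝ fun t' : ℝ => ((x, y), t'))).differentiableAt).hasDerivAt
  have Hux : HasDerivAt (fun x' : ℝ => u (x', y) t) (deriv (fun x' : ℝ => u (x', y) t) x) x :=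
    ((hdu.comp (by fun_prop : Differentiable ℝ fun x' : ℝ => ((x', y), t))).differentiableAt).hasDerivAt
  have Huy : HasDerivAt (fun y' : ℝ => u (x, y') t) (deriv (fun y' : ℝ => u (x, y') t) y) y :=
    ((hdu.comp (by fun_prop : Differentiable ℝ fun y' : ℝ => ((x, y'), t))).differentiableAt).hasDerivAt
  have Hut : HasDerivAt (fun t' : ℝ => u (x, y) t') (deriv (fun t' : ℝ => u (x, y) t') t) t :=
    ((hdu.comp (by fun_prop : Differentiable ℝ fun t' : ℝ => ((x, y), t'))).differentiableAt).hasDerivAt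
  have Hvx : HasDerivAt (fun x' : ℝ => v (x', y) t) (deriv (fun x' : ℝ => v (x', y) t) x) x :=
    ((hdv.comp (by fun_prop : Differentiable ℝ fun x' : ℝ => ((x', y), t))).differentiableAt).hasDerivAt
  have Hvy : HasDerivAt (fun y' : ℝ => v (x, y') t) (deriv (fun y' : ℝ => v (x, y') t) y) y :=
    ((hdv.comp (by fun_prop : Differentiable ℝ fun y' : ℝ => ((x, y'), t))).differentiableAt).hasDerivAt
  have Hvt : HasDerivAt (fun t' : ℝ => v (x, y) t') (deriv (fun t' : ℝ => v (x, y) t') t) t :=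
    ((hdv.comp (by fun_prop : Differentiable ℝ fun t' : ℝ => ((x, y), t'))).differentiableAt).hasDerivAt
  have Hwx : HasDerivAt (fun x' : ℝ => w (x', y) t) (deriv (fun x' : ℝ => w (x', y) t) x) x :=
    ((hdw.comp (by fun_prop : Differentiable ℝ fun x' : ℝ => ((x', y), t))).differentiableAt).hasDerivAt
  have Hwy : HasDerivAt (fun y' : ℝ => w (x, y') t) (deriv (fun y' : ℝ => w (x, y') t) y) y :=
    ((hdw.comp (by fun_prop : Differentiable ℝ fun y' : ℝ => ((x, y'), t))).differentiableAt).hasDerivAt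
  have Hwt : HasDerivAt (fun t' : ℝ => w (x, y) t') (deriv (fun t' : ℝ => w (x, y) t') t) t :=
    ((hdw.comp (by fun_prop : Differentiable ℝ fun t' : ℝ => ((x, y), t'))).differentiableAt).hasDerivAt
  have Hsgx : HasDerivAt (fun x' : ℝ => sg (x', y) t) (deriv (fun x' : ℝ => sg (x', y) t) x) x :=
    ((hdsg.comp (by fun_prop : Differentiable ℝ fun x' : ℝ => ((x', y), t))).differentiableAt).hasDerivAt
  have Hsgy : HasDerivAt (fun y' : ℝ => sg (x, y') t) (deriv (fun y' : ℝ => sg (x, y') t) y) y :=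
    ((hdsg.comp (by fun_prop : Differentiable ℝ fun y' : ℝ => ((x, y'), t))).differentiableAt).hasDerivAt
  have Hsgt : HasDerivAt (fun t' : ℝ => sg (x, y) t') (deriv (fun t' : ℝ => sg (x, y) t') t) t :=
    ((hdsg.comp (by fun_prop : Differentiable ℝ fun t' : ℝ => ((x, y), t'))).differentiableAt).hasDerivAt
  have Hpbarx : HasDerivAt (fun x' : ℝ => pbar (x', y) t) (deriv (fun x' : ℝ => pbar (x', y) t) x) x :=
    ((hdpbar.comp (by fun_prop : Differentiable ℝ fun x' : ℝ => ((x', y), t))).differentiableAt).hasDerivAt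
  have Hpbary : HasDerivAt (fun y' : ℝ => pbar (x, y') t) (deriv (fun y' : ℝ => pbar (x, y') t) y) y :=
    ((hdpbar.comp (by fun_prop : Differentiable ℝ fun y' : ℝ => ((x, y'), t))).differentiableAt).hasDerivAt
  have Hpbart : HasDerivAt (fun t' : ℝ => pbar (x, y) t') (deriv (fun t' : ℝ => pbar (x, y) t') t) t :=
    ((hdpbar.comp (by fun_prop : Differentiable ℝ fun t' : ℝ => ((x, y), t'))).differentiableAt).hasDerivAt
  have Hpbx : HasDerivAt (fun x' : ℝ => pb (x', y) t) (deriv (fun x' : ℝ => pb (x', y) t) x) x :=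
    ((hdpb.comp (by fun_prop : Differentiable ℝ fun x' : ℝ => ((x', y), t))).differentiableAt).hasDerivAt
  have Hpby : HasDerivAt (fun y' : ℝ => pb (x, y') t) (deriv (fun y' : ℝ => pb (x, y') t) y) y :=
    ((hdpb.comp (by fun_prop : Differentiable ℝ fun y' : ℝ => ((x, y'), t))).differentiableAt).hasDerivAt
  have Hpbt : HasDerivAt (fun t' : ℝ => pb (x, y) t') (deriv (fun t' : ℝ => pb (x, y) t') t) t :=
    ((hdpb.comp (by fun_prop : Differentiable ℝ fun t' : ℝ => ((x, y), t'))).differentiableAt).hasDerivAt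
  have Hzx : HasDerivAt (fun x' : ℝ => zb (x', y)) (deriv (fun x' : ℝ => zb (x', y)) x) x :=
    ((hzb.comp (by fun_prop : Differentiable ℝ fun x' : ℝ => ((x', y) : ℝ × ℝ))).differentiableAt).hasDerivAt
  have Hzy : HasDerivAt (fun y' : ℝ => zb (x, y')) (deriv (fun y' : ℝ => zb (x, y')) y) y :=
    ((hzb.comp (by fun_prop : Differentiable ℝ fun y' : ℝ => ((x, y') : ℝ × ℝ))).differentiableAt).hasDerivAt
  have Hzt : HasDerivAt (fun _ : ℝ => zb (x, y)) (0:ℝ) t := hasDerivAt_const t (zb (x, y))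
  have ehu_x : deriv (fun x' : ℝ => h (x', y) t * u (x', y) t) x = ((deriv (fun x' : ℝ => h (x', y) t) x) * u (x, y) t + h (x, y) t * (deriv (fun x' : ℝ => u (x', y) t) x)) :=
    ((Hhx.mul Hux)).deriv.trans (by ring)
  have ehv_y : deriv (fun y' : ℝ => h (x, y') t * v (x, y') t) y = ((deriv (fun y' : ℝ => h (x, y') t) y) * v (x, y) t + h (x, y) t * (deriv (fun y' : ℝ => v (x, y') t) y)) :=
    ((Hhy.mul Hvy)).deriv.trans (by ring)
  have ehu_t : deriv (fun t' : ℝ => h (x, y) t' * u (x, y) t') t = ((deriv (fun t' : ℝ => h (x, y) t') t) * u (x, y) t + h (x, y) t * (deriv (fun t' : ℝ => u (x, y) t') t)) :=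
    ((Hht.mul Hut)).deriv.trans (by ring)
  have emx_x : deriv (fun x' : ℝ => h (x', y) t * (u (x', y) t) ^ 2 + h (x', y) t * pbar (x', y) t) x = (((deriv (fun x' : ℝ => h (x', y) t) x) * (u (x, y) t) ^ 2 + h (x, y) t * (2 * u (x, y) t * (deriv (fun x' : ℝ => u (x', y) t) x))) + ((deriv (fun x' : ℝ => h (x', y) t) x) * pbar (x, y) t + h (x, y) t * (deriv (fun x' : ℝ => pbar (x', y) t) x))) :=
    (((Hhx.mul (Hux.pow 2)).add (Hhx.mul Hpbarx))).deriv.trans (by simp only [Pi.mul_apply, Pi.pow_apply, Pi.add_apply]; ring)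
  have ehvu_y : deriv (fun y' : ℝ => h (x, y') t * v (x, y') t * u (x, y') t) y = (((deriv (fun y' : ℝ => h (x, y') t) y) * v (x, y) t + h (x, y) t * (deriv (fun y' : ℝ => v (x, y') t) y)) * u (x, y) t + (h (x, y) t * v (x, y) t) * (deriv (fun y' : ℝ => u (x, y') t) y)) :=
    (((Hhy.mul Hvy).mul Huy)).deriv.trans (by simp only [Pi.mul_apply, Pi.pow_apply, Pi.add_apply])
  have ehv_t : deriv (fun t' : ℝ => h (x, y) t' * v (x, y) t') t = ((deriv (fun t' : ℝ => h (x, y) t') t) * v (x, y) t + h (x, y) t * (deriv (fun t' : ℝ => v (x, y) t') t)) :=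
    ((Hht.mul Hvt)).deriv.trans (by ring)
  have ehuv_x : deriv (fun x' : ℝ => h (x', y) t * u (x', y) t * v (x', y) t) x = (((deriv (fun x' : ℝ => h (x', y) t) x) * u (x, y) t + h (x, y) t * (deriv (fun x' : ℝ => u (x', y) t) x)) * v (x, y) t + (h (x, y) t * u (x, y) t) * (deriv (fun x' : ℝ => v (x', y) t) x)) :=
    (((Hhx.mul Hux).mul Hvx)).deriv.trans (by simp only [Pi.mul_apply, Pi.pow_apply, Pi.add_apply])
  have emy_y : deriv (fun y' : ℝ => h (x, y') t * (v (x, y') t) ^ 2 + h (x, y') t * pbar (x, y') t) y = (((deriv (fun y' : ℝ => h (x, y') t) y) * (v (x, y) t) ^ 2 + h (x, y) t * (2 * v (x, y) t * (deriv (fun y' : ℝ => v (x, y') t) y))) + ((deriv (fun y' : ℝ => h (x, y') t) y) * pbar (x, y) t + h (x, y) t * (deriv (fun y' : ℝ => pbar (x, y') t) y))) :=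
    (((Hhy.mul (Hvy.pow 2)).add (Hhy.mul Hpbary))).deriv.trans (by simp only [Pi.mul_apply, Pi.pow_apply, Pi.add_apply]; ring)
  have ehw_t : deriv (fun t' : ℝ => h (x, y) t' * w (x, y) t') t = ((deriv (fun t' : ℝ => h (x, y) t') t) * w (x, y) t + h (x, y) t * (deriv (fun t' : ℝ => w (x, y) t') t)) :=
    ((Hht.mul Hwt)).deriv.trans (by ring)
  have ehuw_x : deriv (fun x' : ℝ => h (x', y) t * u (x', y) t * w (x', y) t) x = (((deriv (fun x' : ℝ => h (x', y) t) x) * u (x, y) t + h (x, y) t * (deriv (fun x' : ℝ => u (x', y) t) x)) * w (x, y) t + (h (x, y) t * u (x, y) t) * (deriv (fun x' : ℝ => w (x', y) t) x)) :=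
    (((Hhx.mul Hux).mul Hwx)).deriv.trans (by simp only [Pi.mul_apply, Pi.pow_apply, Pi.add_apply])
  have ehvw_y : deriv (fun y' : ℝ => h (x, y') t * v (x, y') t * w (x, y') t) y = (((deriv (fun y' : ℝ => h (x, y') t) y) * v (x, y) t + h (x, y) t * (deriv (fun y' : ℝ => v (x, y') t) y)) * w (x, y) t + (h (x, y) t * v (x, y) t) * (deriv (fun y' : ℝ => w (x, y') t) y)) :=
    (((Hhy.mul Hvy).mul Hwy)).deriv.trans (by simp only [Pi.mul_apply, Pi.pow_apply, Pi.add_apply])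
  have ehs_t : deriv (fun t' : ℝ => h (x, y) t' * sg (x, y) t') t = ((deriv (fun t' : ℝ => h (x, y) t') t) * sg (x, y) t + h (x, y) t * (deriv (fun t' : ℝ => sg (x, y) t') t)) :=
    ((Hht.mul Hsgt)).deriv.trans (by ring)
  have ehus_x : deriv (fun x' : ℝ => h (x', y) t * u (x', y) t * sg (x', y) t) x = (((deriv (fun x' : ℝ => h (x', y) t) x) * u (x, y) t + h (x, y) t * (deriv (fun x' : ℝ => u (x', y) t) x)) * sg (x, y) t + (h (x, y) t * u (x, y) t) * (deriv (fun x' : ℝ => sg (x', y) t) x)) :=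
    (((Hhx.mul Hux).mul Hsgx)).deriv.trans (by simp only [Pi.mul_apply, Pi.pow_apply, Pi.add_apply])
  have ehvs_y : deriv (fun y' : ℝ => h (x, y') t * v (x, y') t * sg (x, y') t) y = (((deriv (fun y' : ℝ => h (x, y') t) y) * v (x, y) t + h (x, y) t * (deriv (fun y' : ℝ => v (x, y') t) y)) * sg (x, y) t + (h (x, y) t * v (x, y) t) * (deriv (fun y' : ℝ => sg (x, y') t) y)) :=
    (((Hhy.mul Hvy).mul Hsgy)).deriv.trans (by simp only [Pi.mul_apply, Pi.pow_apply, Pi.add_apply])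
  have ehp_t : deriv (fun t' : ℝ => h (x, y) t' * pbar (x, y) t') t = ((deriv (fun t' : ℝ => h (x, y) t') t) * pbar (x, y) t + h (x, y) t * (deriv (fun t' : ℝ => pbar (x, y) t') t)) :=
    ((Hht.mul Hpbart)).deriv.trans (by ring)
  have ehupc_x : deriv (fun x' : ℝ => h (x', y) t * u (x', y) t * (pbar (x', y) t + c ^ 2)) x = (((deriv (fun x' : ℝ => h (x', y) t) x) * u (x, y) t + h (x, y) t * (deriv (fun x' : ℝ => u (x', y) t) x)) * (pbar (x, y) t + (c ^ 2)) + (h (x, y) t * u (x, y) t) * (deriv (fun x' : ℝ => pbar (x', y) t) x)) :=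
    (((Hhx.mul Hux).mul (Hpbarx.add_const (c ^ 2)))).deriv.trans (by simp only [Pi.mul_apply, Pi.pow_apply, Pi.add_apply])
  have ehvpc_y : deriv (fun y' : ℝ => h (x, y') t * v (x, y') t * (pbar (x, y') t + c ^ 2)) y = (((deriv (fun y' : ℝ => h (x, y') t) y) * v (x, y) t + h (x, y) t * (deriv (fun y' : ℝ => v (x, y') t) y)) * (pbar (x, y) t + (c ^ 2)) + (h (x, y) t * v (x, y) t) * (deriv (fun y' : ℝ => pbar (x, y') t) y)) :=
    (((Hhy.mul Hvy).mul (Hpbary.add_const (c ^ 2)))).deriv.trans (by simp only [Pi.mul_apply, Pi.pow_apply, Pi.add_apply])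
  have ehb_t : deriv (fun t' : ℝ => h (x, y) t' * pb (x, y) t') t = ((deriv (fun t' : ℝ => h (x, y) t') t) * pb (x, y) t + h (x, y) t * (deriv (fun t' : ℝ => pb (x, y) t') t)) :=
    ((Hht.mul Hpbt)).deriv.trans (by ring)
  have ehub_x : deriv (fun x' : ℝ => h (x', y) t * u (x', y) t * pb (x', y) t) x = (((deriv (fun x' : ℝ => h (x', y) t) x) * u (x, y) t + h (x, y) t * (deriv (fun x' : ℝ => u (x', y) t) x)) * pb (x, y) t + (h (x, y) t * u (x, y) t) * (deriv (fun x' : ℝ => pb (x', y) t) x)) :=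
    (((Hhx.mul Hux).mul Hpbx)).deriv.trans (by simp only [Pi.mul_apply, Pi.pow_apply, Pi.add_apply])
  have ehvb_y : deriv (fun y' : ℝ => h (x, y') t * v (x, y') t * pb (x, y') t) y = (((deriv (fun y' : ℝ => h (x, y') t) y) * v (x, y) t + h (x, y) t * (deriv (fun y' : ℝ => v (x, y') t) y)) * pb (x, y) t + (h (x, y) t * v (x, y) t) * (deriv (fun y' : ℝ => pb (x, y') t) y)) :=
    (((Hhy.mul Hvy).mul Hpby)).deriv.trans (by simp only [Pi.mul_apply, Pi.pow_apply, Pi.add_apply])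
  have eE_t : deriv (fun t' : ℝ => h (x, y) t' / (2) * ((u (x, y) t') ^ 2 + (v (x, y) t') ^ 2 + (w (x, y) t') ^ 2 + g * (h (x, y) t' + 2 * zb (x, y)) + (sg (x, y) t') ^ 2 / (12) + (pbar (x, y) t') ^ 2 / (c ^ 2) + (pb (x, y) t') ^ 2 / (6 * c ^ 2))) t = (((deriv (fun t' : ℝ => h (x, y) t') t) / (2)) * (((((((u (x, y) t) ^ 2 + (v (x, y) t) ^ 2) + (w (x, y) t) ^ 2) + ((g) * (h (x, y) t + ((2) * zb (x, y))))) + ((sg (x, y) t) ^ 2 / (12))) + ((pbar (x, y) t) ^ 2 / (c ^ 2))) + ((pb (x, y) t) ^ 2 / (6 * c ^ 2))) + (h (x, y) t / (2)) * (((((((2 * u (x, y) t * (deriv (fun t' : ℝ => u (x, y) t') t)) + (2 * v (x, y) t * (deriv (fun t' : ℝ => v (x, y) t') t))) + (2 * w (x, y) t * (deriv (fun t' : ℝ => w (x, y) t') t))) + ((g) * ((deriv (fun t' : ℝ => h (x, y) t') t) + ((2) * (0:ℝ))))) + ((2 * sg (x, y) t * (deriv (fun t' : ℝ => sg (x, y)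 t') t)) / (12))) + ((2 * pbar (x, y) t * (deriv (fun t' : ℝ => pbar (x, y) t') t)) / (c ^ 2))) + ((2 * pb (x, y) t * (deriv (fun t' : ℝ => pb (x, y) t') t)) / (6 * c ^ 2)))) :=
    (((Hht.div_const (2)).mul (((((((Hut.pow 2).add (Hvt.pow 2)).add (Hwt.pow 2)).add ((Hht.add (Hzt.const_mul (2))).const_mul (g))).add ((Hsgt.pow 2).div_const (12))).add ((Hpbart.pow 2).div_const (c ^ 2))).add ((Hpbt.pow 2).div_const (6 * c ^ 2))))).deriv.trans (by simp only [Pi.mul_apply, Pi.pow_apply, Pi.add_apply]; ring)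
  have eF_x : deriv (fun x' : ℝ => u (x', y) t * (h (x', y) t / (2) * ((u (x', y) t) ^ 2 + (v (x', y) t) ^ 2 + (w (x', y) t) ^ 2 + g * (h (x', y) t + 2 * zb (x', y)) + (sg (x', y) t) ^ 2 / (12) + (pbar (x', y) t) ^ 2 / (c ^ 2) + (pb (x', y) t) ^ 2 / (6 * c ^ 2)) + g * (h (x', y) t) ^ 2 / (2) + h (x', y) t * pbar (x', y) t)) x = ((deriv (fun x' : ℝ => u (x', y) t) x) * ((((h (x, y) t / (2)) * (((((((u (x, y) t) ^ 2 + (v (x, y) t) ^ 2) + (w (x, y) t) ^ 2) + ((g) * (h (x, y) t + ((2) * zb (x, y))))) + ((sg (x, y) t) ^ 2 / (12))) + ((pbar (x, y) t) ^ 2 / (c ^ 2))) + ((pb (x, y) t) ^ 2 / (6 * c ^ 2)))) + (((g) * (h (x, y) t) ^ 2) / (2))) + (h (x, y) t * pbar (x, y) t)) + u (x, y) t * (((((deriv (fun x' : ℝ => h (x', y) t) x) / (2)) * (((((((u (x, y) t) ^ 2 + (v (x, y) t) ^ 2) + (w (x, y) t) ^ 2) + ((g) * (h (x, y) t + ((2)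 * zb (x, y))))) + ((sg (x, y) t) ^ 2 / (12))) + ((pbar (x, y) t) ^ 2 / (c ^ 2))) + ((pb (x, y) t) ^ 2 / (6 * c ^ 2))) + (h (x, y) t / (2)) * (((((((2 * u (x, y) t * (deriv (fun x' : ℝ => u (x', y) t) x)) + (2 * v (x, y) t * (deriv (fun x' : ℝ => v (x', y) t) x))) + (2 * w (x, y) t * (deriv (fun x' : ℝ => w (x', y) t) x))) + ((g) * ((deriv (fun x' : ℝ => h (x', y) t) x) + ((2) * (deriv (fun x' : ℝ => zb (x', y)) x))))) + ((2 * sg (x, y) t * (deriv (fun x' : ℝ => sg (x', y) t) x)) / (12))) + ((2 * pbar (x, y) t * (deriv (fun x' : ℝ => pbar (x', y) t) x)) / (c ^ 2))) + ((2 * pb (x, y) t * (deriv (fun x' : ℝ => pb (x', y) t) x)) / (6 * c ^ 2)))) + (((g) * (2 * h (x, y) t * (deriv (fun x' : ℝ => h (x', y) t) x))) / (2))) + ((deriv (fun x' : ℝ => h (x', y) t) x) * pbar (x, y) t + h (x, y) t * (deriv (fun x' : ℝ => pbar (x', y) t) x)))) :=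
    ((Hux.mul ((((Hhx.div_const (2)).mul (((((((Hux.pow 2).add (Hvx.pow 2)).add (Hwx.pow 2)).add ((Hhx.add (Hzx.const_mul (2))).const_mul (g))).add ((Hsgx.pow 2).div_const (12))).add ((Hpbarx.pow 2).div_const (c ^ 2))).add ((Hpbx.pow 2).div_const (6 * c ^ 2)))).add (((Hhx.pow 2).const_mul (g)).div_const (2))).add (Hhx.mul Hpbarx)))).deriv.trans (by simp only [Pi.mul_apply, Pi.pow_apply, Pi.add_apply]; ring)
  have eF_y : deriv (fun y' : ℝ => v (x, y') t * (h (x, y') t / (2) * ((u (x, y') t) ^ 2 + (v (x, y') t) ^ 2 + (w (x, y') t) ^ 2 + g * (h (x, y') t + 2 * zb (x, y')) + (sg (x, y') t) ^ 2 / (12) + (pbar (x, y') t) ^ 2 / (c ^ 2) + (pb (x, y') t) ^ 2 / (6 * c ^ 2)) + g * (h (x, y') t) ^ 2 / (2) + h (x, y') t * pbar (x, y') t)) y = ((deriv (fun y' : ℝ => v (x, y') t) y) * ((((h (x, y) t / (2)) * (((((((u (x, y) t) ^ 2 + (v (x, y) t) ^ 2) + (w (x, y) t) ^ 2) + ((g)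 * (h (x, y) t + ((2) * zb (x, y))))) + ((sg (x, y) t) ^ 2 / (12))) + ((pbar (x, y) t) ^ 2 / (c ^ 2))) + ((pb (x, y) t) ^ 2 / (6 * c ^ 2)))) + (((g) * (h (x, y) t) ^ 2) / (2))) + (h (x, y) t * pbar (x, y) t)) + v (x, y) t * (((((deriv (fun y' : ℝ => h (x, y') t) y) / (2)) * (((((((u (x, y) t) ^ 2 + (v (x, y) t) ^ 2) + (w (x, y) t) ^ 2) + ((g) * (h (x, y) t + ((2) * zb (x, y))))) + ((sg (x, y) t) ^ 2 / (12))) + ((pbar (x, y) t) ^ 2 / (c ^ 2))) + ((pb (x, y) t) ^ 2 / (6 * c ^ 2))) + (h (x, y) t / (2)) * (((((((2 * u (x, y) t * (deriv (fun y' : ℝ => u (x, y') t) y)) + (2 * v (x, y) t * (deriv (fun y' : ℝ => v (x, y') t) y))) + (2 * w (x, y) t * (deriv (fun y' : ℝ => w (x, y') t) y))) + ((g) * ((deriv (fun y' : ℝ => h (x, y') t) y) + ((2) * (deriv (fun y' : ℝ => zb (x, y')) y))))) + ((2 * sg (x, y) t * (deriv (fun y' : ℝ => sg (x, y') t) y))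 / (12))) + ((2 * pbar (x, y) t * (deriv (fun y' : ℝ => pbar (x, y') t) y)) / (c ^ 2))) + ((2 * pb (x, y) t * (deriv (fun y' : ℝ => pb (x, y') t) y)) / (6 * c ^ 2)))) + (((g) * (2 * h (x, y) t * (deriv (fun y' : ℝ => h (x, y') t) y))) / (2))) + ((deriv (fun y' : ℝ => h (x, y') t) y) * pbar (x, y) t + h (x, y) t * (deriv (fun y' : ℝ => pbar (x, y') t) y)))) :=
    ((Hvy.mul ((((Hhy.div_const (2)).mul (((((((Huy.pow 2).add (Hvy.pow 2)).add (Hwy.pow 2)).add ((Hhy.add (Hzy.const_mul (2))).const_mul (g))).add ((Hsgy.pow 2).div_const (12))).add ((Hpbary.pow 2).div_const (c ^ 2))).add ((Hpby.pow 2).div_const (6 * c ^ 2)))).add (((Hhy.pow 2).const_mul (g)).div_const (2))).add (Hhy.mul Hpbary)))).deriv.trans (by simp only [Pi.mul_apply, Pi.pow_apply, Pi.add_apply]; ring)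
  have m0 := mass x y t
  have m1 := momx x y t
  have m2 := momy x y t
  have m3 := momz x y t
  have m4 := sigmaEvol x y t
  have m5 := pEvol x y t
  have m6 := pbEvol x y t
  simp only [pdt, pdx, pdy] at m0 m1 m2 m3 m4 m5 m6 ⊢
  rw [ehu_x, ehv_y] at m0
  rw [ehu_t, emx_x, ehvu_y] at m1
  rw [ehv_t, ehuv_x, emy_y] at m2
  rw [ehw_t, ehuw_x, ehvw_y] at m3
  rw [ehs_t, ehus_x, ehvs_y] at m4
  rw [ehp_t, ehupc_x, ehvpc_y] at m5
  rw [ehb_t, ehub_x, ehvb_y] at m6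
  rw [eE_t, eF_x, eF_y]
  linear_combination (norm := (field_simp; ring1))
    u (x, y) t * m1 + v (x, y) t * m2 + w (x, y) t * m3 + sg (x, y) t / 12 * m4
    + pbar (x, y) t / c ^ 2 * m5 + pb (x, y) t / (6 * c ^ 2) * m6
    + (g * (3 * h (x, y) t / 2 + 2 * zb (x, y))
       - (u (x, y) t ^ 2 + v (x, y) t ^ 2 + w (x, y) t ^ 2
          + g * (h (x, y) t + 2 * zb (x, y)) + sg (x, y) t ^ 2 / 12
          + pbar (x, y) t ^ 2 / c ^ 2 + pb (x, y) t ^ 2 / (6 * c ^ 2)) / 2) * m0
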